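/- Let S be a homogeneous multiplicative system in a graded commutative 2-ring R and let p be a prime homogeneous ideal of R with p ∩ S = ∅. Then the collection of left fractions S⁻¹p := {s⁻¹ ∘ r : s ∈ S, r ∈ p} is a prime homogeneous ideal of the localization S⁻¹R. Moreover, for an arbitrary homogeneous ideal I of R, the collection S⁻¹I := {s⁻¹ ∘ r : s ∈ S, r ∈ I} is a homogeneous ideal of S⁻¹R, and every homogeneous ideal J of S⁻¹R satisfies J = S⁻¹(loc⁻¹ J), where loc : R → S⁻¹R is the localization functor. -/

import Mathlib

open CategoryTheory CategoryTheory.Limits CategoryTheory.MonoidalCategory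

universe w v u v' u' v'' u''

/-- A *graded commutative 2-ring*: an essentially small preadditive symmetric monoidal
category whose tensor product is additive in each variable and in which every object
is invertible for the tensor product. -/
class GradedComm2Ring (C : Type u) [Category.{v} C] [Preadditive C] [MonoidalCategory C]
    [SymmetricCategory C] [MonoidalPreadditive C] : Prop where
  essentiallySmall : EssentiallySmall.{v} C
  invertible : ∀ g : C, ∃ g' : C, Nonempty (g ⊗ g' ≅ 𝟙_ C)
section TranslateDef

variable {C : Type u} [Category.{v} C] [MonoidalCategory C]

/-- `Translate r r'` says that `r'` is a *translate* of `r`: it is obtained from `r`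
by a finite sequence of the operations of tensoring with an identity morphism
(on either side) and of composing with an isomorphism (on either side). -/
inductive Translate : ∀ {g h g' h' : C}, (g ⟶ h) → (g' ⟶ h') → Prop
  | refl {g h : C} (r : g ⟶ h) : Translate r r
  | whiskerLeft {g h g' h' : C} {r : g ⟶ h} {r' : g' ⟶ h'} (ℓ : C) :
      Translate r r' → Translate r (ℓ ◁ r')
  | whiskerRight {g h g' h' : C} {r : g ⟶ h} {r' : g' ⟶ h'} (ℓ : C) :
      Translate r r' → Translate r (r' ▷ ℓ)
  | compIsoLeft {g h g' h' h'' : C} {r : g ⟶ h} {r' : g' ⟶ h'} (u : h' ≅ h'') :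
      Translate r r' → Translate r (r' ≫ u.hom)
  | compIsoRight {g h g' h' g'' : C} {r : g ⟶ h} {r' : g' ⟶ h'} (u : g'' ≅ g') :
      Translate r r' → Translate r (u.hom ≫ r')

end TranslateDef
section IdealDef

variable (C : Type u) [Category.{v} C] [Preadditive C] [MonoidalCategory C]

/-- A *homogeneous ideal* of a graded commutative 2-ring: a family of subgroups
`I(g,h) ⊆ Hom(g,h)` closed under composition with arbitrary morphisms on either side
and under tensoring with arbitrary morphisms on either side. -/
structure HomIdeal where
  carrier : ∀ g h : C, AddSubgroup (g ⟶ h)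
  comp_left : ∀ {g h h' : C} (r : g ⟶ h) (s : h ⟶ h'),
      r ∈ carrier g h → r ≫ s ∈ carrier g h'
  comp_right : ∀ {g' g h : C} (t : g' ⟶ g) (r : g ⟶ h),
      r ∈ carrier g h → t ≫ r ∈ carrier g' h
  tensor_left : ∀ {g h g' h' : C} (s : g' ⟶ h') (r : g ⟶ h),
      r ∈ carrier g h → (s ⊗ₘ r) ∈ carrier (g' ⊗ g) (h' ⊗ h)
  tensor_right : ∀ {g h g' h' : C} (r : g ⟶ h) (s : g' ⟶ h'),
      r ∈ carrier g h → (r ⊗ₘ s) ∈ carrier (g ⊗ g') (h ⊗ h')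

variable {C}

namespace HomIdeal

instance : PartialOrder (HomIdeal C) where
  le I J := ∀ g h : C, I.carrier g h ≤ J.carrier g h
  le_refl I g h := le_rfl
  le_trans I J K h₁ h₂ g h := (h₁ g h).trans (h₂ g h)
  le_antisymm I J h₁ h₂ := by
    cases I; cases J
    congr
    funext g h
    exact le_antisymm (h₁ g h) (h₂ g h)

/-- A homogeneous ideal is *proper* if it contains no identity morphism. -/
def IsProper (I : HomIdeal C) : Prop := ∀ g : C, 𝟙 g ∉ I.carrier g g

/-- A proper homogeneous ideal is *prime* if whenever a composite belongs to it, one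
of the factors belongs to it. -/
structure IsPrime (I : HomIdeal C) : Prop where
  isProper : I.IsProper
  mem_or_mem : ∀ {g h l : C} (r : g ⟶ h) (s : h ⟶ l),
      r ≫ s ∈ I.carrier g l → r ∈ I.carrier g h ∨ s ∈ I.carrier h l

end HomIdeal

end IdealDef
section MulSysDef

variable {C : Type u} [Category.{v} C] [MonoidalCategory C]

/-- A *homogeneous multiplicative system*: a class of morphisms containing all
isomorphisms and closed under composition and under taking translates. -/
structure IsHomMulSystem (S : MorphismProperty C) : Prop where
  iso_mem : ∀ {g h : C} (f : g ⟶ h), IsIso f → S f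
  comp_mem : ∀ {g h l : C} (f : g ⟶ h) (f' : h ⟶ l), S f → S f' → S (f ≫ f')
  translate_mem : ∀ {g h g' h' : C} (f : g ⟶ h) (f' : g' ⟶ h'),
      S f → Translate f f' → S f'

end MulSysDef

/-! ### Auxiliary monoidal lemmas -/

section AuxMonoidal

variable {C : Type u} [Category.{v} C] [MonoidalCategory C]

/-- Auxiliary isomorphism `A ≅ g₂ ⊗ (g ⊗ A)` coming from an isomorphism `g₂ ⊗ g ≅ 𝟙`. -/
def auxChainIso (g₂ g : C) (u : g₂ ⊗ g ≅ 𝟙_ C) (A : C) : A ≅ g₂ ⊗ (g ⊗ A) :=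
  (λ_ A).symm ≪≫ whiskerRightIso u.symm A ≪≫ α_ g₂ g A

lemma auxChain_nat {g₂ g : C} (u : g₂ ⊗ g ≅ 𝟙_ C) {A B : C} (f : A ⟶ B) :
    (auxChainIso g₂ g u A).hom ≫ (g₂ ◁ (g ◁ f)) = f ≫ (auxChainIso g₂ g u B).hom := by
  simp only [auxChainIso, Iso.trans_hom, Iso.symm_hom, whiskerRightIso_hom, Category.assoc]
  rw [← associator_naturality_right]
  slice_lhs 2 3 => rw [← whisker_exchange]
  slice_lhs 1 2 => rw [← leftUnitor_inv_naturality]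
  simp only [Category.assoc]

lemma auxWhiskerLeft_cancel {g₂ g : C} (u : g₂ ⊗ g ≅ 𝟙_ C) {A B : C} {f₁ f₂ : A ⟶ B}
    (h : g ◁ f₁ = g ◁ f₂) : f₁ = f₂ := by
  have h1 := auxChain_nat u f₁
  have h2 := auxChain_nat u f₂
  rw [h, h2] at h1
  exact ((cancel_mono (auxChainIso g₂ g u B).hom).1 h1).symm

lemma auxWhiskerLeft_surj {g₃ g₂ g : C} (u : g₂ ⊗ g ≅ 𝟙_ C) (u₂ : g₃ ⊗ g₂ ≅ 𝟙_ C)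
    {A B : C} (φ : g ⊗ A ⟶ g ⊗ B) : ∃ f : A ⟶ B, g ◁ f = φ := by
  refine ⟨(auxChainIso g₂ g u A).hom ≫ (g₂ ◁ φ) ≫ (auxChainIso g₂ g u B).inv,
    auxWhiskerLeft_cancel u₂ ?_⟩
  rw [← cancel_epi (auxChainIso g₂ g u A).hom, auxChain_nat u]
  simp

lemma auxWhiskerLeft_reflectIso {g₃ g₂ g : C} (u : g₂ ⊗ g ≅ 𝟙_ C) (u₂ : g₃ ⊗ g₂ ≅ 𝟙_ C)
    {A B : C} (ν : A ⟶ B) (hiso : IsIso (g ◁ ν)) : IsIso ν := by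
  obtain ⟨w, hw⟩ := auxWhiskerLeft_surj u u₂ (inv (g ◁ ν))
  refine ⟨⟨w, auxWhiskerLeft_cancel u ?_, auxWhiskerLeft_cancel u ?_⟩⟩
  · rw [MonoidalCategory.whiskerLeft_comp, hw, IsIso.hom_inv_id, MonoidalCategory.whiskerLeft_id]
  · rw [MonoidalCategory.whiskerLeft_comp, hw, IsIso.inv_hom_id, MonoidalCategory.whiskerLeft_id]

lemma aux_unit_comm {A B : C} (p : A ⟶ 𝟙_ C) (q : 𝟙_ C ⟶ B) :
    (A ◁ q) ≫ (p ▷ B) = (ρ_ A).hom ≫ (p ≫ q) ≫ (λ_ B).inv := by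
  rw [whisker_exchange, MonoidalCategory.whiskerRight_id, MonoidalCategory.id_whiskerLeft]
  simp [unitors_equal]

variable [BraidedCategory C]

lemma aux_exists_coherent_unit {g g' : C} (e : g ⊗ g' ≅ 𝟙_ C) :
    ∃ e' : 𝟙_ C ≅ g' ⊗ g, g ◁ e'.hom =
      (ρ_ g).hom ≫ (λ_ g).inv ≫ (e.inv ▷ g) ≫ (α_ g g' g).hom := by
  obtain ⟨ν, hν⟩ := auxWhiskerLeft_surj ((β_ g' g) ≪≫ e) e
      ((ρ_ g).hom ≫ (λ_ g).inv ≫ (e.inv ▷ g) ≫ (α_ g g' g).hom)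
  have : IsIso ν := auxWhiskerLeft_reflectIso ((β_ g' g) ≪≫ e) e ν (by rw [hν]; infer_instance)
  exact ⟨asIso ν, hν⟩

end AuxMonoidal

/-! ### Strict Ore condition and cancellation in a graded commutative 2-ring -/

section AuxGCR

variable {C : Type u} [Category.{v} C] [Preadditive C] [MonoidalCategory C]
    [SymmetricCategory C] [MonoidalPreadditive C] [GradedComm2Ring C]

lemma aux_strict_square {g x l : C} (s : g ⟶ x) (f : g ⟶ l) :
    ∃ (m : C) (t : l ⟶ m) (f' : x ⟶ m),
      Translate s t ∧ Translate f f' ∧ f ≫ t = s ≫ f' := by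
  obtain ⟨g', ⟨e⟩⟩ := GradedComm2Ring.invertible g
  obtain ⟨e', he'⟩ := aux_exists_coherent_unit e
  refine ⟨l ⊗ (g' ⊗ x), (ρ_ l).symm.hom ≫ (l ◁ (e'.hom ≫ (g' ◁ s))),
    ((λ_ x).symm.hom ≫ ((e.symm.hom ≫ (f ▷ g')) ▷ x)) ≫ (α_ l g' x).hom, ?_, ?_, ?_⟩
  · exact Translate.compIsoRight (ρ_ l).symm
      (Translate.whiskerLeft l
        (Translate.compIsoRight e' (Translate.whiskerLeft g' (Translate.refl s))))
  · exact Translate.compIsoLeft (α_ l g' x)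
      (Translate.compIsoRight (λ_ x).symm
        (Translate.whiskerRight x
          (Translate.compIsoRight e.symm (Translate.whiskerRight g' (Translate.refl f)))))
  · have key : (ρ_ g).inv ≫ (g ◁ e'.hom) = (λ_ g).inv ≫ (e.inv ▷ g) ≫ (α_ g g' g).hom := by
      rw [he', Iso.inv_hom_id_assoc]
    have lhs_eq : f ≫ ((ρ_ l).symm.hom ≫ (l ◁ (e'.hom ≫ (g' ◁ s)))) =
        (ρ_ g).inv ≫ (g ◁ e'.hom) ≫ (g ◁ (g' ◁ s)) ≫ (f ▷ (g' ⊗ x)) := by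
      rw [Iso.symm_hom, rightUnitor_inv_naturality_assoc, MonoidalCategory.whiskerLeft_comp]
      slice_lhs 2 3 => rw [← whisker_exchange]
      slice_lhs 3 4 => rw [← whisker_exchange]
    have rhs_eq : s ≫ (((λ_ x).symm.hom ≫ ((e.symm.hom ≫ (f ▷ g')) ▷ x)) ≫ (α_ l g' x).hom) =
        (λ_ g).inv ≫ (e.inv ▷ g) ≫ (α_ g g' g).hom ≫ (g ◁ (g' ◁ s)) ≫ (f ▷ (g' ⊗ x)) := by
      simp only [Iso.symm_hom, comp_whiskerRight, Category.assoc]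
      rw [leftUnitor_inv_naturality_assoc]
      slice_lhs 2 3 => rw [whisker_exchange]
      slice_lhs 3 4 => rw [whisker_exchange]
      slice_lhs 4 5 => rw [associator_naturality_right]
      slice_lhs 3 4 => rw [associator_naturality_left]
      slice_lhs 4 5 => rw [← whisker_exchange]
    rw [lhs_eq, rhs_eq, reassoc_of% key]

lemma aux_strict_ext {g x y : C} (s : g ⟶ x) (h : x ⟶ y) (hsh : s ≫ h = 0) :
    ∃ (z : C) (t : y ⟶ z), Translate s t ∧ h ≫ t = 0 := by
  obtain ⟨x', ⟨ex⟩⟩ := GradedComm2Ring.invertible x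
  let ef : x' ⊗ x ≅ 𝟙_ C := (β_ x' x) ≪≫ ex
  have hw : ((x' ◁ s) ≫ ef.hom) ≫ (ef.inv ≫ (x' ◁ h)) = 0 := by
    rw [Category.assoc, Iso.hom_inv_id_assoc, ← MonoidalCategory.whiskerLeft_comp, hsh,
      MonoidalPreadditive.whiskerLeft_zero]
  have hM : ((x' ⊗ g) ◁ (ef.inv ≫ (x' ◁ h))) ≫ (((x' ◁ s) ≫ ef.hom) ▷ (x' ⊗ y)) = 0 := by
    rw [aux_unit_comm, hw]; simp
  have hK : ((x' ⊗ g) ◁ (x' ◁ h)) ≫ (((x' ◁ s) ≫ ef.hom) ▷ (x' ⊗ y)) = 0 := by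
    have h2 : ((x' ⊗ g) ◁ ef.inv) ≫
        (((x' ⊗ g) ◁ (x' ◁ h)) ≫ (((x' ◁ s) ≫ ef.hom) ▷ (x' ⊗ y))) = 0 := by
      simpa only [MonoidalCategory.whiskerLeft_comp, Category.assoc] using hM
    simpa using congrArg (fun ψ => inv ((x' ⊗ g) ◁ ef.inv) ≫ ψ) h2
  have hP : (((x' ⊗ g) ⊗ x') ◁ h) ≫
      ((α_ (x' ⊗ g) x' y).hom ≫ (((x' ◁ s) ≫ ef.hom) ▷ (x' ⊗ y))) = 0 := by
    rw [← Category.assoc, associator_naturality_right, Category.assoc, hK, comp_zero]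
  obtain ⟨z2, ⟨ez⟩⟩ := GradedComm2Ring.invertible ((x' ⊗ g) ⊗ x')
  let v : z2 ⊗ ((x' ⊗ g) ⊗ x') ≅ 𝟙_ C := (β_ z2 ((x' ⊗ g) ⊗ x')) ≪≫ ez
  refine ⟨z2 ⊗ (𝟙_ C ⊗ (x' ⊗ y)),
    (auxChainIso z2 ((x' ⊗ g) ⊗ x') v y).hom ≫
      (z2 ◁ ((α_ (x' ⊗ g) x' y).hom ≫ (((x' ◁ s) ≫ ef.hom) ▷ (x' ⊗ y)))), ?_, ?_⟩
  · exact Translate.compIsoRight (auxChainIso z2 ((x' ⊗ g) ⊗ x') v y)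
      (Translate.whiskerLeft z2
        (Translate.compIsoRight (α_ (x' ⊗ g) x' y)
          (Translate.whiskerRight (x' ⊗ y)
            (Translate.compIsoLeft ef
              (Translate.whiskerLeft x' (Translate.refl s))))))
  · rw [← Category.assoc, ← auxChain_nat v h, Category.assoc,
      ← MonoidalCategory.whiskerLeft_comp, hP, MonoidalPreadditive.whiskerLeft_zero, comp_zero]

/-- A homogeneous multiplicative system in a graded commutative 2-ring satisfies the
left calculus of fractions. -/
theorem IsHomMulSystem.hasLeftCalculusOfFractions
    {S : MorphismProperty C} (hS : IsHomMulSystem S) :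
    S.HasLeftCalculusOfFractions := by
  haveI : S.ContainsIdentities := ⟨fun X => hS.iso_mem _ inferInstance⟩
  haveI : S.IsStableUnderComposition := ⟨fun f g hf hg => hS.comp_mem f g hf hg⟩
  haveI : S.IsMultiplicative := {}
  exact {
    exists_leftFraction := fun X Y φ => by
      obtain ⟨m, t, f', hts, _, heq⟩ := aux_strict_square φ.s φ.f
      exact ⟨MorphismProperty.LeftFraction.mk f' t (hS.translate_mem _ _ φ.hs hts), heq⟩
    ext := fun X' X Y f₁ f₂ s hs heq => by
      obtain ⟨z, t, hts, h0⟩ := aux_strict_ext s (f₁ - f₂)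
        (by rw [Preadditive.comp_sub, heq, sub_self])
      refine ⟨z, t, hS.translate_mem _ _ hs hts, ?_⟩
      rw [Preadditive.sub_comp, sub_eq_zero] at h0
      exact h0 }

omit [SymmetricCategory C] [MonoidalPreadditive C] [GradedComm2Ring C] in
/-- Homogeneous ideals are closed under translates. -/
lemma HomIdeal.translate_mem (I : HomIdeal C)
    {g h g' h' : C} {r : g ⟶ h} {r' : g' ⟶ h'} (ht : Translate r r')
    (hr : r ∈ I.carrier g h) : r' ∈ I.carrier g' h' := by
  induction ht with
  | refl => exact hr
  | whiskerLeft ℓ _ ih =>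
      simpa only [MonoidalCategory.id_tensorHom] using I.tensor_left (𝟙 ℓ) _ (ih hr)
  | whiskerRight ℓ _ ih =>
      simpa only [MonoidalCategory.tensorHom_id] using I.tensor_right _ (𝟙 ℓ) (ih hr)
  | compIsoLeft u _ ih => exact I.comp_left _ _ (ih hr)
  | compIsoRight u _ ih => exact I.comp_right _ _ (ih hr)

end AuxGCR

/-! ### Ideals of fractions in the localization -/

section AuxLoc

open MorphismProperty

variable {C : Type u} [Category.{v} C] [Preadditive C] [MonoidalCategory C]
    [SymmetricCategory C] [MonoidalPreadditive C] [GradedComm2Ring C]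
    {D : Type u'} [Category.{v'} D] [Preadditive D] [MonoidalCategory D]
    (S : MorphismProperty C) (L : C ⥤ D)

/-- The set of fractions with numerator in `I`, as morphisms between images of `L`. -/
def fracSet (I : HomIdeal C) (a b : C) : Set (L.obj a ⟶ L.obj b) :=
  {φ | ∃ (c : C) (r : a ⟶ c) (s : b ⟶ c), S s ∧ r ∈ I.carrier a c ∧ φ ≫ L.map s = L.map r}

variable [L.IsLocalization S]

lemma exists_frac [S.HasLeftCalculusOfFractions] {a b : C} (φ : L.obj a ⟶ L.obj b) :
    ∃ (c : C) (r : a ⟶ c) (s : b ⟶ c), S s ∧ φ ≫ L.map s = L.map r := by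
  obtain ⟨ψ, hψ⟩ := Localization.exists_leftFraction L S φ
  exact ⟨ψ.Y', ψ.f, ψ.s, ψ.hs, by rw [hψ]; exact ψ.map_comp_map_s L (Localization.inverts L S)⟩

variable {S L}
variable (hS : IsHomMulSystem S)
include hS

lemma fracSet_zero [L.Additive] (I : HomIdeal C) (a b : C) :
    (0 : L.obj a ⟶ L.obj b) ∈ fracSet S L I a b :=
  ⟨b, 0, 𝟙 b, hS.iso_mem _ inferInstance, zero_mem _, by simp⟩

lemma fracSet_add [L.Additive] {I : HomIdeal C} {a b : C} {φ₁ φ₂ : L.obj a ⟶ L.obj b}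
    (h₁ : φ₁ ∈ fracSet S L I a b) (h₂ : φ₂ ∈ fracSet S L I a b) :
    φ₁ + φ₂ ∈ fracSet S L I a b := by
  obtain ⟨c₁, r₁, s₁, hs₁, hr₁, hφ₁⟩ := h₁
  obtain ⟨c₂, r₂, s₂, hs₂, hr₂, hφ₂⟩ := h₂
  obtain ⟨m, t, s₂', hts, hs₂'t, heq⟩ := aux_strict_square s₁ s₂
  refine ⟨m, r₁ ≫ s₂' + r₂ ≫ t, s₂ ≫ t,
    hS.comp_mem _ _ hs₂ (hS.translate_mem _ _ hs₁ hts),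
    add_mem (I.comp_left _ _ hr₁) (I.comp_left _ _ hr₂), ?_⟩
  have e1 : φ₁ ≫ L.map (s₂ ≫ t) = L.map (r₁ ≫ s₂') := by
    rw [heq, L.map_comp, ← Category.assoc, hφ₁, ← L.map_comp]
  have e2 : φ₂ ≫ L.map (s₂ ≫ t) = L.map (r₂ ≫ t) := by
    rw [L.map_comp, ← Category.assoc, hφ₂, ← L.map_comp]
  rw [Preadditive.add_comp, e1, e2, ← L.map_add]

lemma fracSet_neg [L.Additive] {I : HomIdeal C} {a b : C} {φ : L.obj a ⟶ L.obj b}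
    (h : φ ∈ fracSet S L I a b) : -φ ∈ fracSet S L I a b := by
  obtain ⟨c, r, s, hs, hr, hφ⟩ := h
  exact ⟨c, -r, s, hs, neg_mem hr, by rw [Preadditive.neg_comp, hφ, L.map_neg]⟩

lemma fracSet_comp_left [S.HasLeftCalculusOfFractions] {I : HomIdeal C} {a b b'' : C}
    {φ : L.obj a ⟶ L.obj b} (hφ : φ ∈ fracSet S L I a b) (χ : L.obj b ⟶ L.obj b'') :
    φ ≫ χ ∈ fracSet S L I a b'' := by
  obtain ⟨c₁, r₁, s₁, hs₁, hr₁, hφ₁⟩ := hφ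
  obtain ⟨c₂, r₂, s₂, hs₂, hχ⟩ := exists_frac S L χ
  obtain ⟨m, t, r₂', hts, _, heq⟩ := aux_strict_square s₁ r₂
  refine ⟨m, r₁ ≫ r₂', s₂ ≫ t,
    hS.comp_mem _ _ hs₂ (hS.translate_mem _ _ hs₁ hts), I.comp_left _ _ hr₁, ?_⟩
  calc (φ ≫ χ) ≫ L.map (s₂ ≫ t) = φ ≫ (χ ≫ L.map s₂) ≫ L.map t := by
        rw [L.map_comp]; simp only [Category.assoc]
    _ = φ ≫ L.map (r₂ ≫ t) := by rw [hχ, ← L.map_comp]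
    _ = (φ ≫ L.map s₁) ≫ L.map r₂' := by rw [heq, L.map_comp, ← Category.assoc]
    _ = L.map (r₁ ≫ r₂') := by rw [hφ₁, ← L.map_comp]

lemma fracSet_comp_right [S.HasLeftCalculusOfFractions] {I : HomIdeal C} {a' a b : C}
    (χ : L.obj a' ⟶ L.obj a) {φ : L.obj a ⟶ L.obj b} (hφ : φ ∈ fracSet S L I a b) :
    χ ≫ φ ∈ fracSet S L I a' b := by
  obtain ⟨c₁, r₁, s₁, hs₁, hr₁, hφ₁⟩ := hφ
  obtain ⟨d, v, u, hu, hχ⟩ := exists_frac S L χ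
  obtain ⟨m, t, r₁', hts, htr, heq⟩ := aux_strict_square u r₁
  refine ⟨m, v ≫ r₁', s₁ ≫ t,
    hS.comp_mem _ _ hs₁ (hS.translate_mem _ _ hu hts),
    I.comp_right _ _ (I.translate_mem htr hr₁), ?_⟩
  calc (χ ≫ φ) ≫ L.map (s₁ ≫ t) = χ ≫ (φ ≫ L.map s₁) ≫ L.map t := by
        rw [L.map_comp]; simp only [Category.assoc]
    _ = χ ≫ L.map (r₁ ≫ t) := by rw [hφ₁, ← L.map_comp]
    _ = (χ ≫ L.map u) ≫ L.map r₁' := by rw [heq, L.map_comp, ← Category.assoc]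
    _ = L.map (v ≫ r₁') := by rw [hχ, ← L.map_comp]

open Functor.LaxMonoidal Functor.Monoidal in
lemma fracSet_whiskerLeft [S.HasLeftCalculusOfFractions] [L.Monoidal]
    {I : HomIdeal C} {a b : C} (c' : C)
    {φ : L.obj a ⟶ L.obj b} (hφ : φ ∈ fracSet S L I a b) :
    (μIso L c' a).inv ≫ (L.obj c' ◁ φ) ≫ (μIso L c' b).hom ∈ fracSet S L I (c' ⊗ a) (c' ⊗ b) := by
  obtain ⟨c₁, r₁, s₁, hs₁, hr₁, hφ₁⟩ := hφ
  refine ⟨c' ⊗ c₁, c' ◁ r₁, c' ◁ s₁,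
    hS.translate_mem _ _ hs₁ (Translate.whiskerLeft c' (Translate.refl s₁)),
    by simpa only [MonoidalCategory.id_tensorHom] using I.tensor_left (𝟙 c') _ hr₁, ?_⟩
  simp only [Category.assoc, μIso_hom]
  rw [← μ_natural_right, ← MonoidalCategory.whiskerLeft_comp_assoc, hφ₁, μ_natural_right]
  simp

open Functor.LaxMonoidal Functor.Monoidal in
lemma fracSet_whiskerRight [S.HasLeftCalculusOfFractions] [L.Monoidal]
    {I : HomIdeal C} {a b : C} (c' : C)
    {φ : L.obj a ⟶ L.obj b} (hφ : φ ∈ fracSet S L I a b) :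
    (μIso L a c').inv ≫ (φ ▷ L.obj c') ≫ (μIso L b c').hom ∈ fracSet S L I (a ⊗ c') (b ⊗ c') := by
  obtain ⟨c₁, r₁, s₁, hs₁, hr₁, hφ₁⟩ := hφ
  refine ⟨c₁ ⊗ c', r₁ ▷ c', s₁ ▷ c',
    hS.translate_mem _ _ hs₁ (Translate.whiskerRight c' (Translate.refl s₁)),
    by simpa only [MonoidalCategory.tensorHom_id] using I.tensor_right _ (𝟙 c') hr₁, ?_⟩
  simp only [Category.assoc, μIso_hom]
  rw [← μ_natural_left, ← MonoidalCategory.comp_whiskerRight_assoc, hφ₁, μ_natural_left]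
  simp

section Q

variable [L.EssSurj]

/-- The set of morphisms of `D` which, after conjugating with the chosen isomorphisms
to objects in the image of `L`, are fractions with numerator in `I`. -/
noncomputable def qSet (I : HomIdeal C) (d e : D) : Set (d ⟶ e) :=
  {φ | (L.objObjPreimageIso d).hom ≫ φ ≫ (L.objObjPreimageIso e).inv ∈
      fracSet S L I (L.objPreimage d) (L.objPreimage e)}

variable [S.HasLeftCalculusOfFractions]

lemma mem_qSet_of_frac {I : HomIdeal C} {a b : C} {φ : L.obj a ⟶ L.obj b}
    (hφ : φ ∈ fracSet S L I a b) : φ ∈ qSet (S := S) (L := L) I (L.obj a) (L.obj b) := by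
  show _ ∈ fracSet S L I _ _
  simpa only [Category.assoc] using
    fracSet_comp_left hS (fracSet_comp_right hS (L.objObjPreimageIso (L.obj a)).hom hφ)
      (L.objObjPreimageIso (L.obj b)).inv

lemma qSet_comp_left {I : HomIdeal C} {d e k : D} {φ : d ⟶ e}
    (hφ : φ ∈ qSet (S := S) (L := L) I d e) (ψ : e ⟶ k) :
    φ ≫ ψ ∈ qSet (S := S) (L := L) I d k := by
  have : (L.objObjPreimageIso d).hom ≫ (φ ≫ ψ) ≫ (L.objObjPreimageIso k).inv =
      ((L.objObjPreimageIso d).hom ≫ φ ≫ (L.objObjPreimageIso e).inv) ≫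
        ((L.objObjPreimageIso e).hom ≫ ψ ≫ (L.objObjPreimageIso k).inv) := by simp
  show _ ∈ fracSet S L I _ _
  rw [this]
  exact fracSet_comp_left hS hφ _

lemma qSet_comp_right {I : HomIdeal C} {d e k : D} (ψ : d ⟶ e) {φ : e ⟶ k}
    (hφ : φ ∈ qSet (S := S) (L := L) I e k) :
    ψ ≫ φ ∈ qSet (S := S) (L := L) I d k := by
  have : (L.objObjPreimageIso d).hom ≫ (ψ ≫ φ) ≫ (L.objObjPreimageIso k).inv =
      ((L.objObjPreimageIso d).hom ≫ ψ ≫ (L.objObjPreimageIso e).inv) ≫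
        ((L.objObjPreimageIso e).hom ≫ φ ≫ (L.objObjPreimageIso k).inv) := by simp
  show _ ∈ fracSet S L I _ _
  rw [this]
  exact fracSet_comp_right hS _ hφ

lemma mem_qSet_iff {I : HomIdeal C} {a b : C} (φ : L.obj a ⟶ L.obj b) :
    φ ∈ qSet (S := S) (L := L) I (L.obj a) (L.obj b) ↔ φ ∈ fracSet S L I a b := by
  constructor
  · intro h
    have : φ = (L.objObjPreimageIso (L.obj a)).inv ≫
        ((L.objObjPreimageIso (L.obj a)).hom ≫ φ ≫ (L.objObjPreimageIso (L.obj b)).inv) ≫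
          (L.objObjPreimageIso (L.obj b)).hom := by simp
    rw [this]
    simpa only [Category.assoc] using
      fracSet_comp_left hS (fracSet_comp_right hS (L.objObjPreimageIso (L.obj a)).inv h)
        (L.objObjPreimageIso (L.obj b)).hom
  · exact mem_qSet_of_frac hS

open Functor.Monoidal in
lemma qSet_whiskerLeft [L.Monoidal] {I : HomIdeal C} {d e : D} (e' : D) {φ : d ⟶ e}
    (hφ : φ ∈ qSet (S := S) (L := L) I d e) :
    e' ◁ φ ∈ qSet (S := S) (L := L) I (e' ⊗ d) (e' ⊗ e) := by
  set p' := L.objPreimage e'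
  set κ := L.objObjPreimageIso e'
  set φh := (L.objObjPreimageIso d).hom ≫ φ ≫ (L.objObjPreimageIso e).inv with hφh
  have h1 : (μIso L p' (L.objPreimage d)).inv ≫ (L.obj p' ◁ φh) ≫
      (μIso L p' (L.objPreimage e)).hom ∈ fracSet S L I _ _ := by
    have hφ' : φh ∈ fracSet S L I (L.objPreimage d) (L.objPreimage e) := hφ
    exact fracSet_whiskerLeft hS p' hφ'
  have h2 := mem_qSet_of_frac hS h1
  have h3 := qSet_comp_left hS (qSet_comp_right hS ((μIso L p' (L.objPreimage d)).hom) h2)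
      ((μIso L p' (L.objPreimage e)).inv)
  simp only [Iso.hom_inv_id_assoc, Category.assoc, Iso.hom_inv_id, Category.comp_id] at h3
  -- h3 : L.obj p' ◁ φh ∈ qSet I (L.obj p' ⊗ L.obj (pre d)) (L.obj p' ⊗ L.obj (pre e))
  have h4 := qSet_comp_left hS (qSet_comp_right hS (L.obj p' ◁ (L.objObjPreimageIso d).inv) h3)
      (L.obj p' ◁ (L.objObjPreimageIso e).hom)
  have h5 : (L.obj p' ◁ (L.objObjPreimageIso d).inv) ≫ (L.obj p' ◁ φh) ≫
      (L.obj p' ◁ (L.objObjPreimageIso e).hom) = L.obj p' ◁ φ := by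
    simp only [← MonoidalCategory.whiskerLeft_comp]
    rw [hφh]
    congr 1
    simp
  rw [Category.assoc, h5] at h4
  have h6 := qSet_comp_left hS (qSet_comp_right hS (κ.inv ▷ d) h4) (κ.hom ▷ e)
  have h7 : (κ.inv ▷ d) ≫ (L.obj p' ◁ φ) ≫ (κ.hom ▷ e) = e' ◁ φ := by
    rw [← whisker_exchange_assoc]
    simp [← MonoidalCategory.comp_whiskerRight]
  rwa [Category.assoc, h7] at h6

open Functor.Monoidal in
lemma qSet_whiskerRight [L.Monoidal] {I : HomIdeal C} {d e : D} (e' : D) {φ : d ⟶ e}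
    (hφ : φ ∈ qSet (S := S) (L := L) I d e) :
    φ ▷ e' ∈ qSet (S := S) (L := L) I (d ⊗ e') (e ⊗ e') := by
  set p' := L.objPreimage e'
  set κ := L.objObjPreimageIso e'
  set φh := (L.objObjPreimageIso d).hom ≫ φ ≫ (L.objObjPreimageIso e).inv with hφh
  have h1 : (μIso L (L.objPreimage d) p').inv ≫ (φh ▷ L.obj p') ≫
      (μIso L (L.objPreimage e) p').hom ∈ fracSet S L I _ _ := by
    have hφ' : φh ∈ fracSet S L I (L.objPreimage d) (L.objPreimage e) := hφ
    exact fracSet_whiskerRight hS p' hφ'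
  have h2 := mem_qSet_of_frac hS h1
  have h3 := qSet_comp_left hS (qSet_comp_right hS ((μIso L (L.objPreimage d) p').hom) h2)
      ((μIso L (L.objPreimage e) p').inv)
  simp only [Iso.hom_inv_id_assoc, Category.assoc, Iso.hom_inv_id, Category.comp_id] at h3
  have h4 := qSet_comp_left hS (qSet_comp_right hS ((L.objObjPreimageIso d).inv ▷ L.obj p') h3)
      ((L.objObjPreimageIso e).hom ▷ L.obj p')
  have h5 : ((L.objObjPreimageIso d).inv ▷ L.obj p') ≫ (φh ▷ L.obj p') ≫
      ((L.objObjPreimageIso e).hom ▷ L.obj p') = φ ▷ L.obj p' := by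
    simp only [← MonoidalCategory.comp_whiskerRight]
    rw [hφh]
    congr 1
    simp
  rw [Category.assoc, h5] at h4
  have h6 := qSet_comp_left hS (qSet_comp_right hS (d ◁ κ.inv) h4) (e ◁ κ.hom)
  have h7 : (d ◁ κ.inv) ≫ (φ ▷ L.obj p') ≫ (e ◁ κ.hom) = φ ▷ e' := by
    rw [whisker_exchange_assoc]
    simp [← MonoidalCategory.whiskerLeft_comp]
  rwa [Category.assoc, h7] at h6

/-- The ideal of fractions with numerator in `I`, as a homogeneous ideal of `D`. -/
noncomputable def qIdeal [L.Additive] [L.Monoidal] (I : HomIdeal C) : HomIdeal D where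
  carrier d e :=
    { carrier := qSet (S := S) (L := L) I d e
      zero_mem' := by
        show _ ∈ fracSet S L I _ _
        simp only [Limits.comp_zero, Limits.zero_comp]
        exact fracSet_zero hS I _ _
      add_mem' := fun {φ₁ φ₂} h1 h2 => by
        show _ ∈ fracSet S L I _ _
        simp only [Preadditive.comp_add, Preadditive.add_comp]
        exact fracSet_add hS h1 h2
      neg_mem' := fun {φ} h => by
        show _ ∈ fracSet S L I _ _
        simp only [Preadditive.comp_neg, Preadditive.neg_comp]
        exact fracSet_neg hS h }
  comp_left r s hr := qSet_comp_left hS hr s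
  comp_right t r hr := qSet_comp_right hS t hr
  tensor_left s r hr := by
    rw [MonoidalCategory.tensorHom_def]
    exact qSet_comp_right hS _ (qSet_whiskerLeft hS _ hr)
  tensor_right r s hr := by
    rw [MonoidalCategory.tensorHom_def']
    exact qSet_comp_right hS _ (qSet_whiskerRight hS _ hr)

lemma mem_qIdeal_iff [L.Additive] [L.Monoidal] {I : HomIdeal C} {a b : C}
    (φ : L.obj a ⟶ L.obj b) :
    φ ∈ (qIdeal (S := S) (L := L) hS I).carrier (L.obj a) (L.obj b) ↔
      ∃ (c : C) (r : a ⟶ c) (s : b ⟶ c),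
        S s ∧ r ∈ I.carrier a c ∧ φ ≫ L.map s = L.map r :=
  mem_qSet_iff hS φ

end Q

end AuxLoc

/-! ### Primality of the fraction ideal -/

section AuxPrime

open MorphismProperty

variable {C : Type u} [Category.{v} C] [Preadditive C] [MonoidalCategory C]
    [SymmetricCategory C] [MonoidalPreadditive C] [GradedComm2Ring C]
    {D : Type u'} [Category.{v'} D] [Preadditive D] [MonoidalCategory D]
    {S : MorphismProperty C} {L : C ⥤ D} [L.IsLocalization S]
    (hS : IsHomMulSystem S) [S.HasLeftCalculusOfFractions]
include hS

lemma fracSet_id_not_mem {p : HomIdeal C}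
    (hdisj : ∀ ⦃g h : C⦄ (f : g ⟶ h), S f → f ∉ p.carrier g h) (a : C)
    (h : 𝟙 (L.obj a) ∈ fracSet S L p a a) : False := by
  obtain ⟨c, r, s, hs, hr, heq⟩ := h
  rw [Category.id_comp] at heq
  obtain ⟨z, w, hw, hcomp⟩ := (MorphismProperty.map_eq_iff_postcomp L S s r).1 heq
  exact hdisj _ (hS.comp_mem _ _ hs hw) (by rw [hcomp]; exact p.comp_left _ _ hr)

lemma fracSet_prime {p : HomIdeal C} (hp : p.IsPrime)
    (hdisj : ∀ ⦃g h : C⦄ (f : g ⟶ h), S f → f ∉ p.carrier g h)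
    {a b c0 : C} (φ : L.obj a ⟶ L.obj b) (ψ : L.obj b ⟶ L.obj c0)
    (h : φ ≫ ψ ∈ fracSet S L p a c0) :
    φ ∈ fracSet S L p a b ∨ ψ ∈ fracSet S L p b c0 := by
  obtain ⟨c₃, r₃, s₃, hs₃, hr₃, h₃⟩ := h
  obtain ⟨c₁, r₁, s₁, hs₁, hφ₁⟩ := exists_frac S L φ
  have hinv : IsIso (L.map s₁) := Localization.inverts L S _ hs₁
  obtain ⟨mχ, v, u, hu, hχ⟩ := exists_frac S L (inv (L.map s₁) ≫ ψ)
  obtain ⟨n, t, u', hts, htu, heq⟩ := aux_strict_square s₃ u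
  have hφψ : φ ≫ ψ = L.map r₁ ≫ (inv (L.map s₁) ≫ ψ) := by
    rw [← hφ₁]; simp
  have e1 : (φ ≫ ψ) ≫ L.map (u ≫ t) = L.map (r₁ ≫ v ≫ t) := by
    calc (φ ≫ ψ) ≫ L.map (u ≫ t)
        = L.map r₁ ≫ ((inv (L.map s₁) ≫ ψ) ≫ L.map u) ≫ L.map t := by
          rw [hφψ, L.map_comp]; simp only [Category.assoc]
      _ = L.map r₁ ≫ L.map v ≫ L.map t := by rw [hχ]
      _ = L.map (r₁ ≫ v ≫ t) := by rw [← L.map_comp, ← L.map_comp]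
  have e2 : (φ ≫ ψ) ≫ L.map (u ≫ t) = L.map (r₃ ≫ u') := by
    rw [heq, L.map_comp, ← Category.assoc, h₃, ← L.map_comp]
  have emap : L.map (r₁ ≫ v ≫ t) = L.map (r₃ ≫ u') := by rw [← e1, e2]
  obtain ⟨z, w, hw, hcomp⟩ := (MorphismProperty.map_eq_iff_postcomp L S _ _).1 emap
  have hmem : r₁ ≫ v ≫ t ≫ w ∈ p.carrier a z := by
    have hm : (r₃ ≫ u') ≫ w ∈ p.carrier a z := p.comp_left _ _ (p.comp_left _ _ hr₃)
    rw [← hcomp] at hm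
    simpa only [Category.assoc] using hm
  rcases hp.mem_or_mem _ _ hmem with h1 | h2
  · exact Or.inl ⟨c₁, r₁, s₁, hs₁, h1, hφ₁⟩
  · rcases hp.mem_or_mem _ _ h2 with h3 | h4
    · refine Or.inr ?_
      have hχmem : inv (L.map s₁) ≫ ψ ∈ fracSet S L p c₁ c0 := ⟨mχ, v, u, hu, h3, hχ⟩
      have := fracSet_comp_right hS (L.map s₁) hχmem
      simpa only [IsIso.hom_inv_id_assoc] using this
    · exact absurd h4 (hdisj _ (hS.comp_mem _ _ (hS.translate_mem _ _ hs₃ hts) hw))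

lemma qIdeal_isPrime [L.Additive] [L.Monoidal] [L.EssSurj] {p : HomIdeal C} (hp : p.IsPrime)
    (hdisj : ∀ ⦃g h : C⦄ (f : g ⟶ h), S f → f ∉ p.carrier g h) :
    (qIdeal (S := S) (L := L) hS p).IsPrime := by
  constructor
  · intro d hmem
    have h : (L.objObjPreimageIso d).hom ≫ 𝟙 d ≫ (L.objObjPreimageIso d).inv ∈
        fracSet S L p (L.objPreimage d) (L.objPreimage d) := hmem
    rw [Category.id_comp, Iso.hom_inv_id] at h
    exact fracSet_id_not_mem hS hdisj _ h
  · intro g h l r s hrs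
    have h0 : ((L.objObjPreimageIso g).hom ≫ r ≫ (L.objObjPreimageIso h).inv) ≫
        ((L.objObjPreimageIso h).hom ≫ s ≫ (L.objObjPreimageIso l).inv) ∈
          fracSet S L p (L.objPreimage g) (L.objPreimage l) := by
      have hh : ((L.objObjPreimageIso g).hom ≫ r ≫ (L.objObjPreimageIso h).inv) ≫
          ((L.objObjPreimageIso h).hom ≫ s ≫ (L.objObjPreimageIso l).inv) =
            (L.objObjPreimageIso g).hom ≫ (r ≫ s) ≫ (L.objObjPreimageIso l).inv := by simp
      rw [hh]
      exact hrs
    rcases fracSet_prime hS hp hdisj _ _ h0 with h1 | h2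
    · exact Or.inl h1
    · exact Or.inr h2

end AuxPrime

/-- **Statement 15.** Let `S` be a homogeneous multiplicative system in a graded
commutative 2-ring `C`, with localization `L : C ⥤ D` (`D = S⁻¹C`, again a graded
commutative 2-ring).  For a homogeneous ideal `I` of `C`, the collection
`S⁻¹I = {s⁻¹ ∘ r : s ∈ S, r ∈ I}` of left fractions (morphisms `φ : L(a) ⟶ L(b)` with
`φ ∘ L(s) ⁻¹... i.e. φ ≫ L(s) = L(r)` for some `r ∈ I`, `s ∈ S`) is a homogeneous
ideal of `D`; if `p` is prime with `p ∩ S = ∅` then `S⁻¹p` is a prime homogeneous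
ideal; and every homogeneous ideal `J` of `D` satisfies `J = S⁻¹(loc⁻¹ J)`. -/
theorem fraction_ideals_of_localization
    {C : Type u} [Category.{v} C] [Preadditive C] [MonoidalCategory C]
    [SymmetricCategory C] [MonoidalPreadditive C] [GradedComm2Ring C]
    {D : Type u'} [Category.{v'} D] [Preadditive D] [MonoidalCategory D]
    [SymmetricCategory D] [MonoidalPreadditive D] [GradedComm2Ring D]
    (S : MorphismProperty C) (hS : IsHomMulSystem S)
    (L : C ⥤ D) [L.Additive] [L.Monoidal] [L.Braided] [L.IsLocalization S] :
    (∀ p : HomIdeal C, p.IsPrime →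
      (∀ ⦃g h : C⦄ (f : g ⟶ h), S f → f ∉ p.carrier g h) →
      ∃ q : HomIdeal D, q.IsPrime ∧
        ∀ (a b : C) (φ : L.obj a ⟶ L.obj b),
          φ ∈ q.carrier (L.obj a) (L.obj b) ↔
            ∃ (c : C) (r : a ⟶ c) (s : b ⟶ c),
              S s ∧ r ∈ p.carrier a c ∧ φ ≫ L.map s = L.map r) ∧
    (∀ I : HomIdeal C,
      ∃ q : HomIdeal D,
        ∀ (a b : C) (φ : L.obj a ⟶ L.obj b),
          φ ∈ q.carrier (L.obj a) (L.obj b) ↔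
            ∃ (c : C) (r : a ⟶ c) (s : b ⟶ c),
              S s ∧ r ∈ I.carrier a c ∧ φ ≫ L.map s = L.map r) ∧
    (∀ (J : HomIdeal D) (a b : C) (φ : L.obj a ⟶ L.obj b),
      φ ∈ J.carrier (L.obj a) (L.obj b) ↔
        ∃ (c : C) (r : a ⟶ c) (s : b ⟶ c),
          S s ∧ L.map r ∈ J.carrier (L.obj a) (L.obj c) ∧ φ ≫ L.map s = L.map r) := by
  haveI : S.HasLeftCalculusOfFractions := hS.hasLeftCalculusOfFractions
  haveI : L.EssSurj := Localization.essSurj L S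
  refine ⟨?_, ?_, ?_⟩
  · intro p hp hdisj
    exact ⟨qIdeal (S := S) (L := L) hS p, qIdeal_isPrime hS hp hdisj,
      fun a b φ => mem_qIdeal_iff hS φ⟩
  · intro I
    exact ⟨qIdeal (S := S) (L := L) hS I, fun a b φ => mem_qIdeal_iff hS φ⟩
  · intro J a b φ
    constructor
    · intro hφ
      obtain ⟨c, r, s, hs, heq⟩ := exists_frac S L φ
      exact ⟨c, r, s, hs, by rw [← heq]; exact J.comp_left _ _ hφ, heq⟩
    · rintro ⟨c, r, s, hs, hJ, heq⟩
      have : IsIso (L.map s) := Localization.inverts L S _ hs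
      have hφ : φ = L.map r ≫ inv (L.map s) := by rw [← heq]; simp
      rw [hφ]
      exact J.comp_left _ _ hJ
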